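/- arXiv:2305.03381 — 5 statements merged into one kernel-verified Lean document; each statement's English description precedes it below -/
import Mathlib

section
/- For every real μ > 0 and every triple (a,b,c) of reals with μ < a < 2μ, 0 < b < μ, 0 < c < μ, and c ≤ a − b < μ, one has f(a,b,c) ≤ 0, where f(a,b,c) := 2(a−c)c/a − μ/2 + (1/a − 1/μ) · (1/(1/(a−b) − 1/μ)) · (μ/2 − 2((a−b)−c)c/(a−b)). -/
theorem f_nonpos (μ a b c : ℝ) (hμ : 0 < μ)
    (ha₁ : μ < a) (ha₂ : a < 2 * μ)
    (hb₁ : 0 < b) (hb₂ : b < μ)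
    (hc₁ : 0 < c) (hc₂ : c < μ)
    (hcab : c ≤ a - b) (habμ : a - b < μ) :
    2 * (a - c) * c / a - μ / 2 +
      (1 / a - 1 / μ) * (1 / (1 / (a - b) - 1 / μ)) *
        (μ / 2 - 2 * ((a - b) - c) * c / (a - b)) ≤ 0 := by
  have ha : (0:ℝ) < a := lt_trans hμ ha₁
  have hd : (0:ℝ) < a - b := lt_of_lt_of_le hc₁ hcab
  have hμd : (0:ℝ) < μ - (a - b) := by linarith
  have hinv : 1 / (a - b) - 1 / μ = (μ - (a - b)) / ((a - b) * μ) := by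
    field_simp
  have hinvpos : 0 < 1 / (a - b) - 1 / μ := by
    rw [hinv]; positivity
  have key : 2 * (a - c) * c / a - μ / 2 +
      (1 / a - 1 / μ) * (1 / (1 / (a - b) - 1 / μ)) *
        (μ / 2 - 2 * ((a - b) - c) * c / (a - b)) =
      -2 * b * (c - μ / 2) ^ 2 / (a * (μ - (a - b))) := by
    rw [hinv]
    field_simp
    ring
  rw [key]
  apply div_nonpos_of_nonpos_of_nonneg
  · nlinarith [sq_nonneg (c - μ/2)]
  · positivity
end

section
/- For every real μ > 0 and every triple (a,b,c) of reals with μ < a < 2μ, 0 < b < μ, 0 < c < μ, and c ≤ a − b < μ, one has g(a,b,c) ≤ 0, where g(a,b,c) := 2(a−c)c/a − μ/2 + (1/a − 1/μ) · (1/(1/(a−b) − 1/μ)) · (μ/2). -/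
theorem g_nonpos (μ a b c : ℝ) (hμ : 0 < μ)
    (ha₁ : μ < a) (ha₂ : a < 2 * μ)
    (hb₁ : 0 < b) (hb₂ : b < μ)
    (hc₁ : 0 < c) (hc₂ : c < μ)
    (hcab : c ≤ a - b) (habμ : a - b < μ) :
    2 * (a - c) * c / a - μ / 2 +
      (1 / a - 1 / μ) * (1 / (1 / (a - b) - 1 / μ)) * (μ / 2) ≤ 0 := by
  have hd : 0 < a - b := lt_of_lt_of_le hc₁ hcab
  have ht : 0 < μ - (a - b) := by linarith
  have ha : 0 < a := by linarith
  have key : 1 / (1 / (a - b) - 1 / μ) = (a - b) * μ / (μ - (a - b)) := by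
    rw [eq_div_iff ht.ne']
    field_simp
  rw [key]
  have hP : 0 ≤ a * μ * (μ - (a-b)) + (a - μ) * (a-b) * μ - 4 * (a - c) * c * (μ - (a-b)) := by
    rcases le_or_gt (2 * (a - b)) a with h | h
    · nlinarith [mul_nonneg (sub_nonneg.2 hcab) (by linarith : (0:ℝ) ≤ a - c - (a-b)),
        mul_nonneg (sub_nonneg.2 (le_of_lt (by linarith : a - b < a))) (sq_nonneg (μ - 2*(a-b))),
        mul_pos ht hd]
    · nlinarith [sq_nonneg (a - 2*c), mul_pos ht hd,
        mul_nonneg (by linarith : (0:ℝ) ≤ a - μ) (by nlinarith : (0:ℝ) ≤ (a-b)*(a+μ) - a*μ)]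
  have expand : 2 * (a - c) * c / a - μ / 2 +
      (1 / a - 1 / μ) * ((a - b) * μ / (μ - (a - b))) * (μ / 2)
      = -(a * μ * (μ - (a-b)) + (a - μ) * (a-b) * μ - 4 * (a - c) * c * (μ - (a-b)))
        / (2 * a * (μ - (a-b))) := by
    field_simp
    ring
  rw [expand]
  apply div_nonpos_of_nonpos_of_nonneg (by linarith) (by positivity)
end

section
/- Let β ≥ 1 be a real number. For all real x > 0 and y ≥ 0, the function h(x,y) := (β·x + y + √2·√(β·x·y)) / (x + y) satisfies h(x,y) ≤ β + β/(√(β² + 1) + β − 1). -/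
theorem h_upper_bound (β : ℝ) (hβ : 1 ≤ β) (x y : ℝ) (hx : 0 < x) (hy : 0 ≤ y) :
    (β * x + y + Real.sqrt 2 * Real.sqrt (β * x * y)) / (x + y) ≤
      β + β / (Real.sqrt (β ^ 2 + 1) + β - 1) := by
  set s := Real.sqrt (β ^ 2 + 1) with hsdef
  have hs0 : 0 ≤ s := Real.sqrt_nonneg _
  have hs2 : s ^ 2 = β ^ 2 + 1 := Real.sq_sqrt (by positivity)
  have hsβ : β ≤ s := by nlinarith
  have hden : 0 < s + β - 1 := by linarith
  have hfrac : β / (s + β - 1) = (s + 1 - β) / 2 := by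
    rw [div_eq_div_iff (ne_of_gt hden) two_ne_zero]
    nlinarith
  rw [hfrac, div_le_iff₀ (by linarith : (0:ℝ) < x + y)]
  set A := Real.sqrt (β * x * y) with hAdef
  have hA0 : 0 ≤ A := Real.sqrt_nonneg _
  have hA2 : A ^ 2 = β * x * y := Real.sq_sqrt (by positivity)
  have h20 : 0 ≤ Real.sqrt 2 := Real.sqrt_nonneg _
  have h22 : (Real.sqrt 2) ^ 2 = 2 := Real.sq_sqrt (by norm_num)
  -- key: √2 * A ≤ p + q with p = (s+1-β)x/2, q = (s+β-1)y/2
  have hkey : Real.sqrt 2 * A ≤ (s + 1 - β) * x / 2 + (s + β - 1) * y / 2 := by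
    have hp : 0 ≤ (s + 1 - β) * x / 2 := by
      apply div_nonneg _ (by norm_num)
      exact mul_nonneg (by linarith) hx.le
    have hq : 0 ≤ (s + β - 1) * y / 2 := by
      apply div_nonneg _ (by norm_num)
      exact mul_nonneg (by linarith) hy
    have hsq : (Real.sqrt 2 * A) ^ 2 ≤ ((s + 1 - β) * x / 2 + (s + β - 1) * y / 2) ^ 2 := by
      have h4pq : 4 * ((s + 1 - β) * x / 2 * ((s + β - 1) * y / 2)) = 2 * A ^ 2 := by
        rw [hA2]; nlinarith
      nlinarith [sq_nonneg ((s + 1 - β) * x / 2 - (s + β - 1) * y / 2)]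
    nlinarith [hsq, mul_nonneg h20 hA0, hp, hq]
  nlinarith [hkey]
end

section
/- Let β ≥ 1 be a real number and set a := β/(√(β² + 1) + β − 1). For all real x > 0 and y ≥ 0, the function h(x,y) := (β·x + y + √2·√(β·x·y)) / (x + y) satisfies the identity h(x,y) = β + a − (a/(x+y)) · (√x − (√β/(√2·a))·√y)². -/
theorem h_identity (β : ℝ) (hβ : 1 ≤ β) (x y : ℝ) (hx : 0 < x) (hy : 0 ≤ y) :
    (β * x + y + Real.sqrt 2 * Real.sqrt (β * x * y)) / (x + y) =
      β + β / (Real.sqrt (β ^ 2 + 1) + β - 1) -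
        (β / (Real.sqrt (β ^ 2 + 1) + β - 1)) / (x + y) *
          (Real.sqrt x -
            Real.sqrt β / (Real.sqrt 2 * (β / (Real.sqrt (β ^ 2 + 1) + β - 1))) *
              Real.sqrt y) ^ 2 := by
  have hb0 : (0:ℝ) < β := by linarith
  have hxy : 0 < x + y := by linarith
  set s := Real.sqrt (β^2+1) with hs_def
  have hs2 : s^2 = β^2+1 := Real.sq_sqrt (by positivity)
  have hs0 : 0 < s := Real.sqrt_pos.mpr (by positivity)
  have hd : 0 < s + β - 1 := by nlinarith
  set a := β / (s + β - 1) with ha_def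
  have ha : 0 < a := div_pos hb0 hd
  have hkey : 2*a*(a + β - 1) = β := by
    rw [ha_def]
    field_simp
    linear_combination (-1) * hs2
  -- sqrt decomposition
  have h1 : Real.sqrt (β * x * y) = Real.sqrt β * Real.sqrt x * Real.sqrt y := by
    rw [Real.sqrt_mul (by positivity), Real.sqrt_mul hb0.le]
  rw [h1]
  set sb := Real.sqrt β with hsb
  set sx := Real.sqrt x with hsx
  set sy := Real.sqrt y with hsy
  set s2 := Real.sqrt 2 with hs2'
  have hb2 : sb^2 = β := Real.sq_sqrt hb0.le
  have hx2 : sx^2 = x := Real.sq_sqrt hx.le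
  have hy2 : sy^2 = y := Real.sq_sqrt hy
  have h22 : s2^2 = 2 := Real.sq_sqrt (by norm_num)
  have hs2pos : 0 < s2 := Real.sqrt_pos.mpr (by norm_num)
  clear_value a sb sx sy s2
  field_simp
  linear_combination (-y)*hkey + (a*(β*x+y) + a*s2*sb*sx*sy - (x+y)*a*(β+a) + sx^2*a^2)*h22 + 2*a^2*hx2 + sy^2*hb2 + β*hy2
end

section
/- Let μ > 0, let 0 < W ≤ μ, and let C ≥ 0, c ≥ 0, D ≥ 0 be real numbers satisfying D < (W − μ/2)·μ·(C + c). Then (1 + W/2)·C + (1 + 1/W)·D ≤ (1 + μ/2)·(C + c) + (1 + 1/μ)·D. -/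
theorem case2_estimate (μ W C c D : ℝ) (hμ : 0 < μ) (hW₀ : 0 < W) (hWμ : W ≤ μ)
    (hC : 0 ≤ C) (hc : 0 ≤ c) (hD : 0 ≤ D)
    (hcase : D < (W - μ / 2) * μ * (C + c)) :
    (1 + W / 2) * C + (1 + 1 / W) * D ≤ (1 + μ / 2) * (C + c) + (1 + 1 / μ) * D := by
  have hq : 0 ≤ (μ - W) / (W * μ) :=
    div_nonneg (sub_nonneg.2 hWμ) (mul_pos hW₀ hμ).le
  have h := mul_le_mul_of_nonneg_left hcase.le hq
  have heq : (μ - W) / (W * μ) * ((W - μ / 2) * μ * (C + c))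
      = (μ - W) * ((W - μ / 2) / W) * (C + c) := by
    field_simp
  rw [heq] at h
  have hr : (W - μ / 2) / W ≤ 1 / 2 := by
    rw [div_le_div_iff₀ hW₀ (by norm_num : (0:ℝ) < 2)]; linarith
  have h2 : (μ - W) * ((W - μ / 2) / W) ≤ (μ - W) * (1 / 2) :=
    mul_le_mul_of_nonneg_left hr (sub_nonneg.2 hWμ)
  have h3 := mul_le_mul_of_nonneg_right h2 (add_nonneg hC hc)
  have key : (1 / W - 1 / μ) * D ≤ (μ - W) / 2 * (C + c) := by
    have he : (1 / W - 1 / μ) = (μ - W) / (W * μ) := by field_simp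
    rw [he]; nlinarith
  nlinarith [key, mul_nonneg hW₀.le hc]
end
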